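/- Let m ≥ 2 and τ ∈ S_m. For all n ≥ 3, all l with 2 ≤ l ≤ n-1, and all k with 1 ≤ k ≤ n-l+1, one has |A^{(n)}_{l;k} ∩ S_n(τ)| ≤ |S_{n-l+1}(τ)| · |S_l(τ)|; equivalently, under the uniform probability measure P_n^{av(τ)} on S_n(τ), P_n^{av(τ)}(A^{(n)}_{l;k}) ≤ |S_{n-l+1}(τ)|·|S_l(τ)| / |S_n(τ)|. -/
import Mathlib

open Filter

def Contains {n m : ℕ} (σ : Fin n → Fin n) (τ : Fin m → Fin m) : Prop :=
  ∃ f : Fin m → Fin n, StrictMono f ∧ ∀ j k : Fin m, σ (f j) < σ (f k) ↔ τ j < τ k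

def Avoids {n m : ℕ} (σ : Fin n → Fin n) (τ : Fin m → Fin m) : Prop :=
  ¬ Contains σ τ

def AvoidSet (n : ℕ) {m : ℕ} (τ : Equiv.Perm (Fin m)) : Set (Equiv.Perm (Fin n)) :=
  {σ : Equiv.Perm (Fin n) | Avoids ⇑σ ⇑τ}

def ClusterAt {n : ℕ} (l k a : ℕ) (σ : Equiv.Perm (Fin n)) : Prop :=
  (Finset.univ.filter fun i : Fin n => a ≤ (i : ℕ) + 1 ∧ (i : ℕ) + 1 < a + l).image
      (fun i => (σ i : ℕ) + 1) = Finset.Ico k (k + l)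

def ClusterEvent (n l k : ℕ) : Set (Equiv.Perm (Fin n)) :=
  {σ : Equiv.Perm (Fin n) | ∃ a : ℕ, 1 ≤ a ∧ a ≤ n - l + 1 ∧ ClusterAt l k a σ}

def ClusterFree {m : ℕ} (τ : Equiv.Perm (Fin m)) : Prop :=
  ∀ l a k : ℕ, 2 ≤ l → l ≤ m - 1 → 1 ≤ a → a + l ≤ m + 1 → ¬ ClusterAt l k a τ

def ContainsTightly12 {m : ℕ} (τ : Equiv.Perm (Fin m)) : Prop :=
  ∃ i j : Fin m, (j : ℕ) = (i : ℕ) + 1 ∧ (τ j : ℕ) = (τ i : ℕ) + 1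

def ContainsTightly21 {m : ℕ} (τ : Equiv.Perm (Fin m)) : Prop :=
  ∃ i j : Fin m, (j : ℕ) = (i : ℕ) + 1 ∧ (τ i : ℕ) = (τ j : ℕ) + 1

def perm123 : Equiv.Perm (Fin 3) := Equiv.refl (Fin 3)

def perm321 : Equiv.Perm (Fin 3) :=
  ⟨![2, 1, 0], ![2, 1, 0], by intro x; fin_cases x <;> rfl, by intro x; fin_cases x <;> rfl⟩

def p2413 : Equiv.Perm (Fin 4) :=
  ⟨![1, 3, 0, 2], ![2, 0, 3, 1], by intro x; fin_cases x <;> rfl, by intro x; fin_cases x <;> rfl⟩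

def p3142 : Equiv.Perm (Fin 4) :=
  ⟨![2, 0, 3, 1], ![1, 3, 0, 2], by intro x; fin_cases x <;> rfl, by intro x; fin_cases x <;> rfl⟩

def SepSet (n : ℕ) : Set (Equiv.Perm (Fin n)) :=
  {σ : Equiv.Perm (Fin n) | Avoids ⇑σ ⇑p2413 ∧ Avoids ⇑σ ⇑p3142}


def gcol (l K w : ℕ) : ℕ := if w < K then w else if w < K + l then K else w - (l - 1)
def ppos (l A j : ℕ) : ℕ := if j ≤ A then j else j + (l - 1)

lemma gcol_lt_gcol {l K w1 w2 : ℕ} (hl : 1 ≤ l)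
    (hno : ¬(K ≤ w1 ∧ w1 < K + l) ∨ ¬(K ≤ w2 ∧ w2 < K + l) ∨ w1 = w2) :
    w1 < w2 ↔ gcol l K w1 < gcol l K w2 := by unfold gcol; split_ifs <;> omega

lemma gcol_inj {l K w1 w2 : ℕ} (hl : 1 ≤ l) (h1 : ¬(K ≤ w1 ∧ w1 < K + l))
    (h2 : ¬(K ≤ w2 ∧ w2 < K + l)) (h : gcol l K w1 = gcol l K w2) : w1 = w2 := by
  unfold gcol at h; split_ifs at h <;> omega

lemma gcol_eq_K {l K w : ℕ} (hl : 1 ≤ l) (h : gcol l K w = K) : K ≤ w ∧ w < K + l := by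
  unfold gcol at h; split_ifs at h <;> omega

lemma gcol_mid {l K w : ℕ} (h : K ≤ w ∧ w < K + l) : gcol l K w = K := by
  unfold gcol; split_ifs <;> omega

def ClusterRel (n l K r : ℕ) (σ : Equiv.Perm (Fin n)) (π : Equiv.Perm (Fin r))
    (β : Equiv.Perm (Fin l)) : Prop :=
  ∃ A : ℕ, A + l ≤ n ∧
    (∀ i : Fin n, (A ≤ (i:ℕ) ∧ (i:ℕ) < A + l) ↔ (K ≤ (σ i:ℕ) ∧ (σ i:ℕ) < K + l)) ∧
    (∀ j : Fin r, ∀ i : Fin n, (i:ℕ) = ppos l A (j:ℕ) → (π j:ℕ) = gcol l K (σ i:ℕ)) ∧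
    (∀ t : Fin l, ∀ i : Fin n, (i:ℕ) = A + (t:ℕ) → (σ i:ℕ) = K + (β t:ℕ))

lemma build_rel (n l K r : ℕ) (hl2 : 2 ≤ l) (hrl : r + l = n + 1) (hKn : K + l ≤ n)
    (σ : Equiv.Perm (Fin n)) (A : ℕ) (hA : A + l ≤ n)
    (hiff : ∀ i : Fin n, (A ≤ (i:ℕ) ∧ (i:ℕ) < A + l) ↔ (K ≤ (σ i:ℕ) ∧ (σ i:ℕ) < K + l)) :
    ∃ (π : Equiv.Perm (Fin r)) (β : Equiv.Perm (Fin l)),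
      ClusterRel n l K r σ π β ∧ Contains ⇑σ ⇑π ∧ Contains ⇑σ ⇑β := by
  have hb : ∀ t : Fin l, A + (t:ℕ) < n := fun t => by have := t.isLt; omega
  have hpb : ∀ j : Fin r, ppos l A (j:ℕ) < n := by
    intro j; have := j.isLt; unfold ppos; split <;> omega
  have hmidb : ∀ t : Fin l, K ≤ (σ ⟨A + t, hb t⟩ : ℕ) ∧ (σ ⟨A + t, hb t⟩ : ℕ) < K + l := by
    intro t
    exact (hiff ⟨A + t, hb t⟩).mp ⟨Nat.le_add_right A t, by
      show A + (t:ℕ) < A + l; have := t.isLt; omega⟩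
  have hβb : ∀ t : Fin l, (σ ⟨A + t, hb t⟩ : ℕ) - K < l := fun t => by have := hmidb t; omega
  have hβinj : Function.Injective (fun t : Fin l => (⟨(σ ⟨A + t, hb t⟩ : ℕ) - K, hβb t⟩ : Fin l)) := by
    intro t1 t2 h
    have h1 := hmidb t1; have h2 := hmidb t2
    have hv : (σ ⟨A + t1, hb t1⟩ : ℕ) - K = (σ ⟨A + t2, hb t2⟩ : ℕ) - K := congrArg Fin.val h
    have hσ : σ ⟨A + t1, hb t1⟩ = σ ⟨A + t2, hb t2⟩ := Fin.ext (by omega)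
    have hv2 : A + (t1:ℕ) = A + (t2:ℕ) := congrArg Fin.val (σ.injective hσ)
    exact Fin.ext (by omega)
  let β : Equiv.Perm (Fin l) :=
    Equiv.ofBijective _ (Finite.injective_iff_bijective.mp hβinj)
  have hβ_app : ∀ t : Fin l, (β t : ℕ) = (σ ⟨A + t, hb t⟩ : ℕ) - K := fun t => rfl
  have hπb : ∀ j : Fin r, gcol l K (σ ⟨ppos l A (j:ℕ), hpb j⟩ : ℕ) < r := by
    intro j
    have hw := (σ ⟨ppos l A (j:ℕ), hpb j⟩).isLt
    unfold gcol; split_ifs <;> omega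
  have hmid_eq : ∀ j : Fin r,
      (K ≤ (σ ⟨ppos l A (j:ℕ), hpb j⟩ : ℕ) ∧ (σ ⟨ppos l A (j:ℕ), hpb j⟩ : ℕ) < K + l) →
      (j:ℕ) = A := by
    intro j hm
    have h2 := (hiff _).mpr hm
    have hv : ((⟨ppos l A (j:ℕ), hpb j⟩ : Fin n) : ℕ) = ppos l A (j:ℕ) := rfl
    rw [hv] at h2
    have := j.isLt
    unfold ppos at h2; split at h2 <;> omega
  have hπinj : Function.Injective
      (fun j : Fin r => (⟨gcol l K (σ ⟨ppos l A (j:ℕ), hpb j⟩ : ℕ), hπb j⟩ : Fin r)) := by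
    intro j1 j2 h
    have hv : gcol l K (σ ⟨ppos l A (j1:ℕ), hpb j1⟩ : ℕ)
        = gcol l K (σ ⟨ppos l A (j2:ℕ), hpb j2⟩ : ℕ) := congrArg Fin.val h
    by_cases hm1 : K ≤ (σ ⟨ppos l A (j1:ℕ), hpb j1⟩ : ℕ) ∧ (σ ⟨ppos l A (j1:ℕ), hpb j1⟩ : ℕ) < K + l
    · by_cases hm2 : K ≤ (σ ⟨ppos l A (j2:ℕ), hpb j2⟩ : ℕ) ∧ (σ ⟨ppos l A (j2:ℕ), hpb j2⟩ : ℕ) < K + l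
      · exact Fin.ext ((hmid_eq j1 hm1).trans (hmid_eq j2 hm2).symm)
      · rw [gcol_mid hm1] at hv
        exact absurd (gcol_eq_K (by omega) hv.symm) hm2
    · by_cases hm2 : K ≤ (σ ⟨ppos l A (j2:ℕ), hpb j2⟩ : ℕ) ∧ (σ ⟨ppos l A (j2:ℕ), hpb j2⟩ : ℕ) < K + l
      · rw [gcol_mid hm2] at hv
        exact absurd (gcol_eq_K (by omega) hv) hm1
      · have hw := gcol_inj (l := l) (K := K) (by omega) hm1 hm2 hv
        have hv2 : ppos l A (j1:ℕ) = ppos l A (j2:ℕ) :=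
          congrArg Fin.val (σ.injective (Fin.ext hw))
        have := j1.isLt; have := j2.isLt
        refine Fin.ext ?_
        unfold ppos at hv2; split at hv2 <;> split at hv2 <;> omega
  let π : Equiv.Perm (Fin r) :=
    Equiv.ofBijective _ (Finite.injective_iff_bijective.mp hπinj)
  have hπ_app : ∀ j : Fin r, (π j : ℕ) = gcol l K (σ ⟨ppos l A (j:ℕ), hpb j⟩ : ℕ) := fun j => rfl
  refine ⟨π, β, ⟨A, hA, hiff, ?_, ?_⟩, ?_, ?_⟩
  · intro j i hi
    have hie : i = ⟨ppos l A (j:ℕ), hpb j⟩ := Fin.ext hi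
    rw [hie, hπ_app]
  · intro t i hi
    have hie : i = ⟨A + (t:ℕ), hb t⟩ := Fin.ext hi
    rw [hie, hβ_app]
    have := hmidb t; omega
  · -- Contains σ π
    refine ⟨fun j => ⟨ppos l A (j:ℕ), hpb j⟩, ?_, ?_⟩
    · intro j1 j2 h12
      have h12' : (j1:ℕ) < (j2:ℕ) := h12
      show (⟨ppos l A (j1:ℕ), hpb j1⟩ : Fin n) < ⟨ppos l A (j2:ℕ), hpb j2⟩
      rw [Fin.lt_def]
      show ppos l A (j1:ℕ) < ppos l A (j2:ℕ)
      unfold ppos; split_ifs <;> omega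
    · intro j1 j2
      rw [Fin.lt_def, Fin.lt_def, hπ_app, hπ_app]
      show (σ ⟨ppos l A (j1:ℕ), hpb j1⟩ : ℕ) < (σ ⟨ppos l A (j2:ℕ), hpb j2⟩ : ℕ) ↔ _
      by_cases hm1 : K ≤ (σ ⟨ppos l A (j1:ℕ), hpb j1⟩ : ℕ) ∧ (σ ⟨ppos l A (j1:ℕ), hpb j1⟩ : ℕ) < K + l
      · by_cases hm2 : K ≤ (σ ⟨ppos l A (j2:ℕ), hpb j2⟩ : ℕ) ∧ (σ ⟨ppos l A (j2:ℕ), hpb j2⟩ : ℕ) < K + l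
        · have he : (j1:ℕ) = (j2:ℕ) := (hmid_eq j1 hm1).trans (hmid_eq j2 hm2).symm
          have : j1 = j2 := Fin.ext he
          subst this
          simp
        · exact gcol_lt_gcol (by omega) (Or.inr (Or.inl hm2))
      · exact gcol_lt_gcol (by omega) (Or.inl hm1)
  · -- Contains σ β
    refine ⟨fun t => ⟨A + (t:ℕ), hb t⟩, ?_, ?_⟩
    · intro t1 t2 h12
      have h12' : (t1:ℕ) < (t2:ℕ) := h12
      show (⟨A + (t1:ℕ), hb t1⟩ : Fin n) < ⟨A + (t2:ℕ), hb t2⟩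
      rw [Fin.lt_def]
      show A + (t1:ℕ) < A + (t2:ℕ)
      omega
    · intro t1 t2
      rw [Fin.lt_def, Fin.lt_def, hβ_app, hβ_app]
      show (σ ⟨A + (t1:ℕ), hb t1⟩ : ℕ) < (σ ⟨A + (t2:ℕ), hb t2⟩ : ℕ) ↔ _
      have h1 := hmidb t1; have h2 := hmidb t2
      omega

lemma clusterRel_inj (n l K r : ℕ) (hl2 : 2 ≤ l) (hrl : r + l = n + 1) (hKn : K + l ≤ n)
    (σ σ' : Equiv.Perm (Fin n)) (π : Equiv.Perm (Fin r)) (β : Equiv.Perm (Fin l))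
    (h1 : ClusterRel n l K r σ π β) (h2 : ClusterRel n l K r σ' π β) : σ = σ' := by
  obtain ⟨A, hA, hiff, hπ, hβ⟩ := h1
  obtain ⟨A', hA', hiff', hπ', hβ'⟩ := h2
  have hl1 : 1 ≤ l := by omega
  have hAr : A < r := by omega
  have hA'r : A' < r := by omega
  have hA'n : A' < n := by omega
  -- value of π at A' is K (from σ' data)
  have hπA' : (π ⟨A', hA'r⟩ : ℕ) = K := by
    have h3 := hπ' ⟨A', hA'r⟩ ⟨A', hA'n⟩ (by
      show A' = ppos l A' A'
      unfold ppos; simp)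
    rw [h3]
    exact gcol_mid ((hiff' ⟨A', hA'n⟩).mp ⟨le_refl A', by show A' < A' + l; omega⟩)
  -- from σ data: A' = A
  have hppb : ppos l A A' < n := by unfold ppos; split <;> omega
  have hgcol : gcol l K (σ ⟨ppos l A A', hppb⟩ : ℕ) = K := by
    have h3 := hπ ⟨A', hA'r⟩ ⟨ppos l A A', hppb⟩ rfl
    rw [← h3, hπA']
  have hmid := gcol_eq_K hl1 hgcol
  have hblk := (hiff ⟨ppos l A A', hppb⟩).mpr hmid
  have hAA : A' = A := by
    have hv : ((⟨ppos l A A', hppb⟩ : Fin n) : ℕ) = ppos l A A' := rfl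
    rw [hv] at hblk
    unfold ppos at hblk; split at hblk <;> omega
  subst hAA
  apply Equiv.ext
  intro i
  by_cases hblk2 : A' ≤ (i:ℕ) ∧ (i:ℕ) < A' + l
  · have ht : (i:ℕ) - A' < l := by omega
    have e1 := hβ ⟨(i:ℕ) - A', ht⟩ i (by show (i:ℕ) = A' + ((i:ℕ) - A'); omega)
    have e2 := hβ' ⟨(i:ℕ) - A', ht⟩ i (by show (i:ℕ) = A' + ((i:ℕ) - A'); omega)
    exact Fin.ext (by omega)
  · have hir : ∃ j : Fin r, ppos l A' (j:ℕ) = (i:ℕ) := by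
      have hin := i.isLt
      by_cases hlt : (i:ℕ) < A'
      · exact ⟨⟨(i:ℕ), by omega⟩, by show ppos l A' (i:ℕ) = (i:ℕ); unfold ppos; split <;> omega⟩
      · refine ⟨⟨(i:ℕ) - (l-1), by omega⟩, ?_⟩
        show ppos l A' ((i:ℕ) - (l-1)) = (i:ℕ)
        unfold ppos; split <;> omega
    obtain ⟨j, hj⟩ := hir
    have e1 := hπ j i hj.symm
    have e2 := hπ' j i hj.symm
    have hm1 : ¬(K ≤ (σ i:ℕ) ∧ (σ i:ℕ) < K + l) := fun hm => hblk2 ((hiff i).mpr hm)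
    have hm2 : ¬(K ≤ (σ' i:ℕ) ∧ (σ' i:ℕ) < K + l) := fun hm => hblk2 ((hiff' i).mpr hm)
    exact Fin.ext (gcol_inj hl1 hm1 hm2 (by rw [← e1, ← e2]))

lemma contains_trans {n p m : ℕ} {σ : Fin n → Fin n} {ρ : Fin p → Fin p} {τ : Fin m → Fin m}
    (h1 : Contains σ ρ) (h2 : Contains ρ τ) : Contains σ τ := by
  obtain ⟨f, hf, hfo⟩ := h1
  obtain ⟨g, hg, hgo⟩ := h2
  exact ⟨f ∘ g, hf.comp hg, fun j k => (hfo (g j) (g k)).trans (hgo j k)⟩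

lemma cluster_iff {n l k a : ℕ} (σ : Equiv.Perm (Fin n)) (ha : 1 ≤ a) (hk : 1 ≤ k)
    (hl : 1 ≤ l) (han : (a-1) + l ≤ n) (hkn : (k-1) + l ≤ n) (h : ClusterAt l k a σ) :
    ∀ i : Fin n, ((a-1) ≤ (i:ℕ) ∧ (i:ℕ) < (a-1) + l) ↔
      ((k-1) ≤ (σ i:ℕ) ∧ (σ i:ℕ) < (k-1) + l) := by
  classical
  unfold ClusterAt at h
  set B : Finset (Fin n) := Finset.univ.filter (fun i : Fin n => a ≤ (i:ℕ)+1 ∧ (i:ℕ)+1 < a + l) with hB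
  set C : Finset (Fin n) := Finset.univ.filter (fun i : Fin n => k ≤ (σ i:ℕ)+1 ∧ (σ i:ℕ)+1 < k + l) with hC
  have hBC : B ⊆ C := by
    intro i hi
    have hmem : (σ i : ℕ) + 1 ∈ Finset.Ico k (k+l) := by
      rw [← h]; exact Finset.mem_image.mpr ⟨i, hi, rfl⟩
    simp only [Finset.mem_Ico] at hmem
    simp only [hC, Finset.mem_filter, Finset.mem_univ, true_and]
    omega
  have hBcard : B.card = l := by
    have himg : B.image (fun i : Fin n => (i:ℕ)) = Finset.Ico (a-1) (a-1+l) := by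
      ext x
      simp only [Finset.mem_image, hB, Finset.mem_filter, Finset.mem_univ, true_and,
        Finset.mem_Ico]
      constructor
      · rintro ⟨i, hi, rfl⟩; omega
      · intro hx
        exact ⟨⟨x, by omega⟩, by simp; omega, rfl⟩
    have h2 := Finset.card_image_of_injective B (Fin.val_injective)
    rw [himg] at h2
    simp only [Nat.card_Ico] at h2; omega
  have hCcard : C.card = l := by
    have himg : C.image (fun i : Fin n => (σ i:ℕ)) = Finset.Ico (k-1) (k-1+l) := by
      ext x
      simp only [Finset.mem_image, hC, Finset.mem_filter, Finset.mem_univ, true_and,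
        Finset.mem_Ico]
      constructor
      · rintro ⟨i, hi, rfl⟩; omega
      · intro hx
        refine ⟨σ.symm ⟨x, by omega⟩, ?_, ?_⟩ <;> simp <;> omega
    have hinj : Function.Injective (fun i : Fin n => (σ i : ℕ)) :=
      fun i j hij => σ.injective (Fin.val_injective hij)
    have h2 := Finset.card_image_of_injective C hinj
    rw [himg] at h2
    simp only [Nat.card_Ico] at h2; omega
  have hEq : B = C := Finset.eq_of_subset_of_card_le hBC (by omega)
  intro i
  have hmem : i ∈ B ↔ i ∈ C := by rw [hEq]
  simp only [hB, hC, Finset.mem_filter, Finset.mem_univ, true_and] at hmem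
  omega

/-- upper bound on the number (and probability) of `τ`-avoiding permutations
in `A^{(n)}_{l;k}`. -/
theorem avoid_cluster_upper_bound (m : ℕ) (hm : 2 ≤ m) (τ : Equiv.Perm (Fin m))
    (n : ℕ) (hn : 3 ≤ n) (l : ℕ) (hl2 : 2 ≤ l) (hln : l ≤ n - 1)
    (k : ℕ) (hk1 : 1 ≤ k) (hk2 : k ≤ n - l + 1) :
    (ClusterEvent n l k ∩ AvoidSet n τ).ncard ≤
      (AvoidSet (n - l + 1) τ).ncard * (AvoidSet l τ).ncard ∧
    ((ClusterEvent n l k ∩ AvoidSet n τ).ncard : ℝ) / ((AvoidSet n τ).ncard : ℝ) ≤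
      (((AvoidSet (n - l + 1) τ).ncard * (AvoidSet l τ).ncard : ℕ) : ℝ) /
        ((AvoidSet n τ).ncard : ℝ) := by
  classical
  have part1 : (ClusterEvent n l k ∩ AvoidSet n τ).ncard ≤
      (AvoidSet (n - l + 1) τ).ncard * (AvoidSet l τ).ncard := by
    set r := n - l + 1 with hr
    set K := k - 1 with hK
    have hrl : r + l = n + 1 := by omega
    have hKn : K + l ≤ n := by omega
    set S := ClusterEvent n l k ∩ AvoidSet n τ with hS
    set T := (AvoidSet r τ) ×ˢ (AvoidSet l τ) with hT
    have exists_rel : ∀ σ ∈ S, ∃ y : Equiv.Perm (Fin r) × Equiv.Perm (Fin l),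
        ClusterRel n l K r σ y.1 y.2 ∧ y ∈ T := by
      rintro σ ⟨hc, hav⟩
      obtain ⟨a, ha1, ha2, hca⟩ := hc
      have hA : (a - 1) + l ≤ n := by omega
      have hiff := cluster_iff σ ha1 hk1 (by omega) hA (by omega) hca
      obtain ⟨π, β, hrel, hcπ, hcβ⟩ := build_rel n l K r hl2 hrl hKn σ (a-1) hA
        (by rw [hK]; exact hiff)
      exact ⟨(π, β), hrel, ⟨fun hcon => hav (contains_trans hcπ hcon),
        fun hcon => hav (contains_trans hcβ hcon)⟩⟩
    choose f hf1 hf2 using fun x : ↥S => exists_rel x.1 x.2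
    have finj : Function.Injective (fun x : ↥S => (⟨f x, hf2 x⟩ : ↥T)) := by
      intro x y hxy
      have hfe : f x = f y := congrArg Subtype.val hxy
      have hxy1 := clusterRel_inj n l K r hl2 hrl hKn x.1 y.1 (f x).1 (f x).2 (hf1 x)
        (by rw [hfe]; exact hf1 y)
      exact Subtype.ext hxy1
    calc S.ncard = Nat.card ↥S := (Nat.card_coe_set_eq S).symm
      _ ≤ Nat.card ↥T := Nat.card_le_card_of_injective _ finj
      _ = Nat.card (↥(AvoidSet r τ) × ↥(AvoidSet l τ)) := Nat.card_congr (Equiv.Set.prod _ _)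
      _ = Nat.card ↥(AvoidSet r τ) * Nat.card ↥(AvoidSet l τ) := Nat.card_prod _ _
      _ = (AvoidSet r τ).ncard * (AvoidSet l τ).ncard := by
          rw [Nat.card_coe_set_eq, Nat.card_coe_set_eq]
  refine ⟨part1, ?_⟩
  by_cases h0 : ((AvoidSet n τ).ncard : ℝ) = 0
  · rw [h0]
    simp
  · have hc : (0:ℝ) < ((AvoidSet n τ).ncard : ℝ) :=
      lt_of_le_of_ne (Nat.cast_nonneg _) (Ne.symm h0)
    have hnum : ((ClusterEvent n l k ∩ AvoidSet n τ).ncard : ℝ) ≤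
        (((AvoidSet (n - l + 1) τ).ncard * (AvoidSet l τ).ncard : ℕ) : ℝ) := by
      exact_mod_cast part1
    gcongr
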